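/- Let R be a unique factorization domain and A an m×n matrix over R such that all 2×2 minors of A vanish. Then A has inner rank at most 1: there exist a column vector A' ∈ Rᵐ and a row vector A'' ∈ Rⁿ with A = A'·A''. -/

import Mathlib

/-- Over a UFD, a matrix all of whose `2 × 2` minors vanish has inner rank at
most `1`: it factors as a column vector times a row vector. -/
theorem inner_rank_le_one_of_minors_vanish (R : Type*) [CommRing R] [IsDomain R]
    [UniqueFactorizationMonoid R] (m n : ℕ) (A : Matrix (Fin m) (Fin n) R)
    (hminors : ∀ i k j l, A i j * A k l = A i l * A k j) :
    ∃ (u : Fin m → R) (v : Fin n → R), ∀ i j, A i j = u i * v j := by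
  by_cases h0 : ∀ i j, A i j = 0
  · exact ⟨0, 0, fun i j => by simp [h0]⟩
  push_neg at h0
  obtain ⟨i0, j0, ha⟩ := h0
  letI := UniqueFactorizationMonoid.normalizationMonoid (α := R)
  letI := UniqueFactorizationMonoid.toNormalizedGCDMonoid R
  set a := A i0 j0 with ha_def
  set g := Finset.univ.gcd (fun j => A i0 j) with hg_def
  have hgdvd : ∀ j, ∃ c, A i0 j = g * c := fun j =>
    Finset.gcd_dvd (Finset.mem_univ j)
  have hg0 : g ≠ 0 := by
    intro h
    obtain ⟨c, hc⟩ := hgdvd j0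
    rw [h, zero_mul] at hc
    exact ha hc
  have hadvd : ∀ i, ∃ c, A i j0 * g = a * c := by
    intro i
    have h1 : a ∣ Finset.univ.gcd (fun j => A i j0 * A i0 j) := by
      apply Finset.dvd_gcd
      intro j _
      exact ⟨A i j, by linear_combination -hminors i0 i j0 j⟩
    replace h1 : a ∣ normalize (A i j0) * g := (h1.trans (Finset.gcd_mul_left' (s := Finset.univ) (f := fun j => A i0 j) (A i j0)).dvd).trans
      (mul_dvd_mul_right (dvd_normalize_iff.mpr dvd_rfl) g)
    have h2 : normalize (A i j0) * g ∣ A i j0 * g :=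
      mul_dvd_mul_right (normalize_dvd_iff.mpr dvd_rfl) g
    exact h1.trans h2
  choose u hu using hadvd
  choose v hv using hgdvd
  refine ⟨u, v, fun i j => ?_⟩
  have key : (a * g) * A i j = (a * g) * (u i * v j) := by
    linear_combination g * hminors i0 i j0 j + A i0 j * hu i + a * u i * hv j
  exact mul_left_cancel₀ (mul_ne_zero ha hg0) key
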